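/- Let β > 0, r > 0 and A ≥ 0, B ≥ 0 be real numbers, and set λ = β + √(β² + βB/r²). If A ≤ λr² + (β/λ)A + (β/λ)B, then A ≤ 2λr², and moreover 2λr² ≤ 4βr² + 2√(βr²B). -/

import Mathlib

lemma sqrt_add_le' (x y : ℝ) (hx : 0 ≤ x) (hy : 0 ≤ y) :
    Real.sqrt (x + y) ≤ Real.sqrt x + Real.sqrt y := by
  have h : x + y ≤ (Real.sqrt x + Real.sqrt y) ^ 2 := by
    have hx' := Real.sq_sqrt hx
    have hy' := Real.sq_sqrt hy
    nlinarith [Real.sqrt_nonneg x, Real.sqrt_nonneg y]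
  calc Real.sqrt (x + y) ≤ Real.sqrt ((Real.sqrt x + Real.sqrt y) ^ 2) :=
        Real.sqrt_le_sqrt h
    _ = Real.sqrt x + Real.sqrt y := Real.sqrt_sq (by positivity)

/-- Algebraic resolution of the self-bounding inequality at the optimal multiplier
`λ = β + √(β² + βB/r²)`: if `A ≤ λr² + (β/λ)A + (β/λ)B` then `A ≤ 2λr²`, and moreover
`2λr² ≤ 4βr² + 2√(βr²B)`. -/
theorem self_bounding_resolution
    (β r A B lam : ℝ) (hβ : 0 < β) (hr : 0 < r) (hA : 0 ≤ A) (hB : 0 ≤ B)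
    (hlam : lam = β + Real.sqrt (β ^ 2 + β * B / r ^ 2))
    (h : A ≤ lam * r ^ 2 + (β / lam) * A + (β / lam) * B) :
    A ≤ 2 * lam * r ^ 2 ∧
      2 * lam * r ^ 2 ≤ 4 * β * r ^ 2 + 2 * Real.sqrt (β * r ^ 2 * B) := by
  have hr2 : (0:ℝ) < r ^ 2 := by positivity
  set s := Real.sqrt (β ^ 2 + β * B / r ^ 2) with hsdef
  have hnn : (0:ℝ) ≤ β ^ 2 + β * B / r ^ 2 := by positivity
  have hs2 : s ^ 2 = β ^ 2 + β * B / r ^ 2 := Real.sq_sqrt hnn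
  have hβs : β ≤ s := by
    have h1 : Real.sqrt (β ^ 2) ≤ s :=
      Real.sqrt_le_sqrt (by nlinarith [div_nonneg (mul_nonneg hβ.le hB) hr2.le])
    rwa [Real.sqrt_sq hβ.le] at h1
  have hspos : 0 < s := lt_of_lt_of_le hβ hβs
  have hlampos : 0 < lam := by rw [hlam]; positivity
  have hne : lam ≠ 0 := ne_of_gt hlampos
  -- multiply h through by lam
  have h2 : A * lam ≤ lam * r ^ 2 * lam + β * A + β * B := by
    have h3 := mul_le_mul_of_nonneg_right h hlampos.le
    calc A * lam ≤ (lam * r ^ 2 + (β / lam) * A + (β / lam) * B) * lam := h3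
      _ = lam * r ^ 2 * lam + β * A + β * B := by field_simp
  have hsr : s ^ 2 * r ^ 2 = β ^ 2 * r ^ 2 + β * B := by
    field_simp [hs2]
    rw [hs2, add_mul, div_mul_cancel₀ _ hr2.ne']; ring
  have heq : lam * r ^ 2 * lam + β * B = 2 * lam * r ^ 2 * s := by
    rw [hlam]; linear_combination -hsr
  have hAs : A * s = A * lam - β * A := by rw [hlam]; ring
  have key : A * s ≤ 2 * lam * r ^ 2 * s := by linarith
  have first : A ≤ 2 * lam * r ^ 2 := le_of_mul_le_mul_right (by linarith) hspos
  refine ⟨first, ?_⟩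
  have hval : r ^ 2 * s = Real.sqrt (β ^ 2 * r ^ 4 + β * r ^ 2 * B) := by
    rw [hsdef, ← Real.sqrt_sq hr2.le, ← Real.sqrt_mul (by positivity)]
    congr 1
    field_simp
    ring
    rw [Real.sq_sqrt (by positivity : (0:ℝ) ≤ r ^ 4)]
  have hsplit : Real.sqrt (β ^ 2 * r ^ 4 + β * r ^ 2 * B) ≤
      Real.sqrt (β ^ 2 * r ^ 4) + Real.sqrt (β * r ^ 2 * B) :=
    sqrt_add_le' _ _ (by positivity) (by positivity)
  have hsq : Real.sqrt (β ^ 2 * r ^ 4) = β * r ^ 2 := by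
    rw [show β ^ 2 * r ^ 4 = (β * r ^ 2) ^ 2 by ring, Real.sqrt_sq (by positivity)]
  have hfin : r ^ 2 * s ≤ β * r ^ 2 + Real.sqrt (β * r ^ 2 * B) := by
    rw [hval]; rw [hsq] at hsplit; linarith
  have : 2 * lam * r ^ 2 = 2 * β * r ^ 2 + 2 * (r ^ 2 * s) := by rw [hlam]; ring
  linarith
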